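/- For every a ≥ 0, every μ > 0, and every r with r ≥ 1/μ, 1 − (1/(a + 1/μ))·∫_{a}^{∞} μ·exp(−μ(t−a))·min(r, max(0, a + 1/μ − t)) dt = (e·(1 + a·μ) − 1)/(e·(1 + a·μ)), where e = exp(1). -/

import Mathlib

open MeasureTheory Real

theorem integral_helper (a : ℝ) (ha : 0 ≤ a) (μ : ℝ) (hμ : 0 < μ)
    (r : ℝ) (hr : 1 / μ ≤ r) :
    (∫ t in Set.Ioi a,
      μ * Real.exp (-μ * (t - a)) * min r (max 0 (a + 1 / μ - t)))
      = Real.exp (-1) / μ := by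
  set c : ℝ := a + 1 / μ with hc
  have hμ' : (0:ℝ) < 1 / μ := by positivity
  have hac : a < c := by rw [hc]; linarith
  have hr0 : (0:ℝ) ≤ r := le_trans hμ'.le hr
  set f : ℝ → ℝ := fun t => μ * Real.exp (-μ * (t - a)) * min r (max 0 (a + 1 / μ - t)) with hf
  have hfc : Continuous f := by
    apply Continuous.mul
    · fun_prop
    · exact (continuous_const.min ((continuous_const.max (by fun_prop))))
  have hfz : ∀ t ∈ Set.Ioi c, f t = 0 := by
    intro t ht
    rw [Set.mem_Ioi, hc] at ht
    have hle : a + 1 / μ - t ≤ 0 := by linarith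
    show μ * Real.exp (-μ * (t - a)) * min r (max 0 (a + 1 / μ - t)) = 0
    rw [max_eq_left hle, min_eq_right hr0, mul_zero]
  have hsplit : Set.Ioc a c ∪ Set.Ioi c = Set.Ioi a := Set.Ioc_union_Ioi_eq_Ioi hac.le
  have hzero : ∫ t in Set.Ioi c, f t = 0 := by
    rw [setIntegral_congr_fun measurableSet_Ioi (g := fun _ => (0:ℝ)) hfz]
    simp
  have hIoc : ∫ t in Set.Ioc a c, f t = Real.exp (-1) / μ := by
    have hcong : ∫ t in Set.Ioc a c, f t
        = ∫ t in Set.Ioc a c, μ * Real.exp (-μ * (t - a)) * (c - t) := by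
      apply setIntegral_congr_fun measurableSet_Ioc
      intro t ht
      obtain ⟨ht1, ht2⟩ := ht
      rw [hc] at ht2
      have h1 : (0:ℝ) ≤ a + 1 / μ - t := by linarith
      have h2 : a + 1 / μ - t ≤ r := by
        have : a + 1 / μ - t ≤ 1 / μ := by linarith
        linarith
      show μ * Real.exp (-μ * (t - a)) * min r (max 0 (a + 1 / μ - t))
          = μ * Real.exp (-μ * (t - a)) * (c - t)
      rw [max_eq_right h1, min_eq_right h2, hc]
    rw [hcong, ← intervalIntegral.integral_of_le hac.le]
    have hderiv : ∀ t ∈ Set.uIcc a c,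
        HasDerivAt (fun t => (t - a) * Real.exp (-μ * (t - a)))
          (μ * Real.exp (-μ * (t - a)) * (c - t)) t := by
      intro t _
      have h1 : HasDerivAt (fun t : ℝ => t - a) 1 t := (hasDerivAt_id t).sub_const a
      have h2 : HasDerivAt (fun t : ℝ => Real.exp (-μ * (t - a)))
          (Real.exp (-μ * (t - a)) * -μ) t := by
        have : HasDerivAt (fun t : ℝ => -μ * (t - a)) (-μ) t := by
          simpa using h1.const_mul (-μ)
        simpa [mul_comm, Function.comp_def] using (Real.hasDerivAt_exp (-μ * (t - a))).comp t this
      have := h1.mul h2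
      convert this using 1
      · rfl
      · rfl
      · rfl
      have hct : c - t = a + 1 / μ - t := by rw [hc]
      rw [hct]
      have hμ1 : μ * (1 / μ) = 1 := mul_one_div_cancel hμ.ne'
      linear_combination (Real.exp (-μ * (t - a))) * hμ1
    rw [intervalIntegral.integral_eq_sub_of_hasDerivAt hderiv
      (Continuous.intervalIntegrable (by fun_prop) a c)]
    have hca : c - a = 1 / μ := by rw [hc]; ring
    rw [hca]
    have h3 : -μ * (1 / μ) = -1 := by field_simp
    rw [h3, sub_self, mul_comm, ← div_eq_mul_one_div]
    simp
  have hint2 : IntegrableOn f (Set.Ioi c) := by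
    exact (integrableOn_zero).congr_fun (fun t ht => (hfz t ht).symm) measurableSet_Ioi
  have hunion : ∫ t in Set.Ioi a, f t
      = (∫ t in Set.Ioc a c, f t) + ∫ t in Set.Ioi c, f t := by
    rw [← hsplit]
    exact setIntegral_union (Set.Ioc_disjoint_Ioi le_rfl) measurableSet_Ioi
      (hfc.integrableOn_Ioc) hint2
  rw [hunion, hIoc, hzero, add_zero]

/-- Second case of the worst-case efficiency formula (equation (19)) of the
paper: for shifted-exponential runtimes (shift `a ≥ 0`, rate `μ`) and
round-trip time `r ≥ 1/μ`, the efficiency `1 − E[Tu]/E[β]` equals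
`(e·(1 + aμ) − 1)/(e·(1 + aμ))`. -/
theorem efficiency_large_rtt
    (a : ℝ) (ha : 0 ≤ a) (μ : ℝ) (hμ : 0 < μ)
    (r : ℝ) (hr : 1 / μ ≤ r) :
    1 - (1 / (a + 1 / μ)) *
        ∫ t in Set.Ioi a,
          μ * Real.exp (-μ * (t - a)) * min r (max 0 (a + 1 / μ - t))
      = (Real.exp 1 * (1 + a * μ) - 1) / (Real.exp 1 * (1 + a * μ)) := by
  rw [integral_helper a ha μ hμ r hr]
  have he : Real.exp (-1) = 1 / Real.exp 1 := by rw [Real.exp_neg]; ring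
  have he1 : (0:ℝ) < Real.exp 1 := Real.exp_pos 1
  have h1 : (0:ℝ) < a + 1 / μ := by positivity
  have h2 : (0:ℝ) < 1 + a * μ := by positivity
  rw [he]
  field_simp
  ring
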